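/- Let A be a real n×d matrix and let T be a subset of the row indices {1, …, n} such that the row submatrix A_T (the rows of A indexed by T) has full column rank d. Then for every i = 1, …, n, the generalised leverage score of A with respect to A_T dominates the true leverage score: ℓ^{A_T}(i) = A(i,:)ᵀ(A_TᵀA_T)⁻¹A(i,:) ≥ A(i,:)ᵀ(AᵀA)⁻¹A(i,:) = ℓ(i). (This is the deterministic lower-bound part of the Leverage Score Approximation via Uniform Sampling theorem: generalised leverage scores with respect to any row-subsampled matrix overestimate the true leverage scores.) -/

import Mathlib

open Matrix BigOperators

/-- Cauchy–Schwarz for the bilinear form of a real positive semidefinite matrix. -/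
lemma psd_cauchy_schwarz {d : ℕ} {M : Matrix (Fin d) (Fin d) ℝ}
    (hM : M.PosSemidef) (u v : Fin d → ℝ) :
    (u ⬝ᵥ M.mulVec v) ^ 2 ≤ (u ⬝ᵥ M.mulVec u) * (v ⬝ᵥ M.mulVec v) := by
  have hsym : Mᵀ = M := hM.1
  have hswap : ∀ a b : Fin d → ℝ, a ⬝ᵥ M.mulVec b = b ⬝ᵥ M.mulVec a := by
    intro a b
    rw [Matrix.dotProduct_mulVec, ← Matrix.mulVec_transpose, hsym, dotProduct_comm]
  have key : ∀ t : ℝ,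
      0 ≤ (v ⬝ᵥ M.mulVec v) * (t * t) + (2 * (u ⬝ᵥ M.mulVec v)) * t + (u ⬝ᵥ M.mulVec u) := by
    intro t
    have h0 : 0 ≤ (u + t • v) ⬝ᵥ M.mulVec (u + t • v) := by
      have := hM.dotProduct_mulVec_nonneg (u + t • v)
      simpa using this
    have hexp : (u + t • v) ⬝ᵥ M.mulVec (u + t • v)
        = (v ⬝ᵥ M.mulVec v) * (t * t) + (2 * (u ⬝ᵥ M.mulVec v)) * t + (u ⬝ᵥ M.mulVec u) := by
      rw [Matrix.mulVec_add, Matrix.mulVec_smul, add_dotProduct,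
        smul_dotProduct, dotProduct_add, dotProduct_add,
        dotProduct_smul, dotProduct_smul, hswap v u]
      simp only [smul_eq_mul]
      ring
    linarith [hexp ▸ h0]
  have hd := discrim_le_zero key
  rw [discrim] at hd
  nlinarith [hd]

/-- Monotonicity of quadratic forms of inverses. -/
lemma inv_quadform_mono {d : ℕ} {M N : Matrix (Fin d) (Fin d) ℝ}
    (hM : M.PosDef) (hN : N.PosDef)
    (hMN : ∀ x, x ⬝ᵥ M.mulVec x ≤ x ⬝ᵥ N.mulVec x) (x : Fin d → ℝ) :
    x ⬝ᵥ N⁻¹.mulVec x ≤ x ⬝ᵥ M⁻¹.mulVec x := by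
  set u := N⁻¹.mulVec x with hu
  set w := M⁻¹.mulVec x with hw
  have hNu : N.mulVec u = x := by
    rw [hu, Matrix.mulVec_mulVec, Matrix.mul_nonsing_inv _ (isUnit_iff_ne_zero.mpr hN.det_pos.ne'), Matrix.one_mulVec]
  have hMw : M.mulVec w = x := by
    rw [hw, Matrix.mulVec_mulVec, Matrix.mul_nonsing_inv _ (isUnit_iff_ne_zero.mpr hM.det_pos.ne'), Matrix.one_mulVec]
  have hxu : x ⬝ᵥ u = u ⬝ᵥ N.mulVec u := by rw [← hNu, dotProduct_comm, hNu]
  have hxw : x ⬝ᵥ w = w ⬝ᵥ M.mulVec w := by rw [← hMw, dotProduct_comm, hMw]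
  have hc0 : 0 ≤ x ⬝ᵥ u := by
    rw [hxu]; simpa using hN.posSemidef.dotProduct_mulVec_nonneg u
  have hw0 : 0 ≤ x ⬝ᵥ w := by
    rw [hxw]; simpa using hM.posSemidef.dotProduct_mulVec_nonneg w
  have hcs : (u ⬝ᵥ M.mulVec w) ^ 2 ≤ (u ⬝ᵥ M.mulVec u) * (w ⬝ᵥ M.mulVec w) :=
    psd_cauchy_schwarz hM.posSemidef u w
  rw [hMw, dotProduct_comm u x] at hcs
  have hwx : w ⬝ᵥ x = x ⬝ᵥ w := dotProduct_comm w x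
  have h2 : (x ⬝ᵥ u) ^ 2 ≤ (x ⬝ᵥ u) * (x ⬝ᵥ w) := by
    calc (x ⬝ᵥ u) ^ 2 ≤ (u ⬝ᵥ M.mulVec u) * (w ⬝ᵥ x) := hcs
      _ ≤ (u ⬝ᵥ N.mulVec u) * (w ⬝ᵥ x) := by
          have h0 : 0 ≤ w ⬝ᵥ x := by rw [hwx]; exact hw0
          exact mul_le_mul_of_nonneg_right (hMN u) h0
      _ = (x ⬝ᵥ u) * (x ⬝ᵥ w) := by rw [← hxu, hwx]
  rcases eq_or_lt_of_le hc0 with h | h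
  · rw [← h]; exact hw0
  · nlinarith [h2]

/-- if the row submatrix A_T has full column rank d, then for every row i,
the generalised leverage score of A w.r.t. A_T dominates the true leverage score:
A(i,:)ᵀ(A_TᵀA_T)⁻¹A(i,:) ≥ A(i,:)ᵀ(AᵀA)⁻¹A(i,:). -/
theorem generalised_leverage_scores_dominate
    {n d : ℕ} (A : Matrix (Fin n) (Fin d) ℝ) (T : Finset (Fin n))
    (hT : (A.submatrix (fun i : {i : Fin n // i ∈ T} => (i : Fin n)) id).rank = d) :
    ∀ i : Fin n,
      A i ⬝ᵥ (Aᵀ * A)⁻¹.mulVec (A i)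
        ≤ A i ⬝ᵥ
            ((A.submatrix (fun i : {i : Fin n // i ∈ T} => (i : Fin n)) id)ᵀ *
              (A.submatrix (fun i : {i : Fin n // i ∈ T} => (i : Fin n)) id))⁻¹.mulVec (A i) := by
  intro i
  set B := A.submatrix (fun i : {i : Fin n // i ∈ T} => (i : Fin n)) id with hB
  -- B has trivial kernel
  have hinj : Function.Injective B.mulVecLin := by
    rw [← LinearMap.ker_eq_bot]
    have hrn := B.mulVecLin.finrank_range_add_finrank_ker
    rw [show Module.finrank ℝ (LinearMap.range B.mulVecLin) = d from hT] at hrn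
    simp only [Module.finrank_fintype_fun_eq_card, Fintype.card_fin] at hrn
    have : Module.finrank ℝ (LinearMap.ker B.mulVecLin) = 0 := by omega
    exact Submodule.finrank_eq_zero.mp this
  have hBx : ∀ x : Fin d → ℝ, x ≠ 0 → B.mulVec x ≠ 0 := by
    intro x hx h
    exact hx (hinj (by simpa [Matrix.mulVecLin] using h))
  -- quadratic forms as norms
  have hquad : ∀ (m : ℕ) (C : Matrix (Fin m) (Fin d) ℝ) (x : Fin d → ℝ),
      x ⬝ᵥ (Cᵀ * C).mulVec x = C.mulVec x ⬝ᵥ C.mulVec x := by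
    intro m C x
    rw [← Matrix.mulVec_mulVec, Matrix.dotProduct_mulVec, Matrix.vecMul_transpose]
  have hquadB : ∀ x : Fin d → ℝ,
      x ⬝ᵥ (Bᵀ * B).mulVec x = B.mulVec x ⬝ᵥ B.mulVec x := by
    intro x
    rw [← Matrix.mulVec_mulVec, Matrix.dotProduct_mulVec, Matrix.vecMul_transpose]
  -- PosDef of BᵀB
  have hBposd : (Bᵀ * B).PosDef := by
    refine Matrix.PosDef.of_dotProduct_mulVec_pos (Matrix.isHermitian_conjTranspose_mul_self B) (fun x hx => ?_)
    have : (star x) ⬝ᵥ (Bᵀ * B).mulVec x = B.mulVec x ⬝ᵥ B.mulVec x := by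
      simpa using hquadB x
    rw [this]
    have hne := hBx x hx
    rcases Function.ne_iff.mp hne with ⟨j, hj⟩
    have : 0 < ∑ k, B.mulVec x k * B.mulVec x k := by
      apply Finset.sum_pos' (fun k _ => mul_self_nonneg _)
      exact ⟨j, Finset.mem_univ j, mul_self_pos.mpr hj⟩
    simpa [dotProduct] using this
  -- A also injective: B is a row-submatrix
  have hAx : ∀ x : Fin d → ℝ, x ≠ 0 → A.mulVec x ≠ 0 := by
    intro x hx h
    apply hBx x hx
    funext j
    have : A.mulVec x (j : Fin n) = 0 := by rw [h]; rfl
    simpa [hB, Matrix.mulVec, dotProduct, Matrix.submatrix] using this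
  have hAposd : (Aᵀ * A).PosDef := by
    refine Matrix.PosDef.of_dotProduct_mulVec_pos (Matrix.isHermitian_conjTranspose_mul_self A) (fun x hx => ?_)
    have : (star x) ⬝ᵥ (Aᵀ * A).mulVec x = A.mulVec x ⬝ᵥ A.mulVec x := by
      simpa using hquad n A x
    rw [this]
    have hne := hAx x hx
    rcases Function.ne_iff.mp hne with ⟨j, hj⟩
    have : 0 < ∑ k, A.mulVec x k * A.mulVec x k := by
      apply Finset.sum_pos' (fun k _ => mul_self_nonneg _)
      exact ⟨j, Finset.mem_univ j, mul_self_pos.mpr hj⟩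
    simpa [dotProduct] using this
  -- BᵀB ⪯ AᵀA in quadratic form sense
  have hle : ∀ x : Fin d → ℝ, x ⬝ᵥ (Bᵀ * B).mulVec x ≤ x ⬝ᵥ (Aᵀ * A).mulVec x := by
    intro x
    rw [hquadB x, hquad n A x]
    have hBA : ∀ j : {i : Fin n // i ∈ T}, B.mulVec x j = A.mulVec x (j : Fin n) := by
      intro j
      simp [hB, Matrix.mulVec, dotProduct, Matrix.submatrix]
    calc B.mulVec x ⬝ᵥ B.mulVec x
        = ∑ j : {i : Fin n // i ∈ T}, A.mulVec x (j : Fin n) * A.mulVec x (j : Fin n) := by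
          simp only [dotProduct]
          exact Finset.sum_congr rfl fun j _ => by rw [hBA j]
      _ = ∑ j ∈ T, A.mulVec x j * A.mulVec x j := by
          rw [← Finset.sum_coe_sort T (fun j => A.mulVec x j * A.mulVec x j)]
      _ ≤ ∑ j, A.mulVec x j * A.mulVec x j := by
          apply Finset.sum_le_sum_of_subset_of_nonneg (Finset.subset_univ T)
          exact fun j _ _ => mul_self_nonneg _
      _ = A.mulVec x ⬝ᵥ A.mulVec x := rfl
  exact inv_quadform_mono hBposd hAposd hle (A i)
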